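/- Uniform modulus estimate for perturbed branching data (Lemma 3.2 of the paper): with γ, (p_k) as in the context, let γ̃ : ℝ^d × A → [0, γ̄] and, for each k ∈ ℕ, p̃_k : ℝ^d × A → [0,1] with Σ_{k=0}^∞ p̃_k(y,a) = 1 for all (y,a). For (x,a) set I_k(x,a) := I_k(γ(x,a), (p_l(x,a))_l) and Ĩ_k(y,a) := I_k(γ̃(y,a), (p̃_l(y,a))_l), and define I^a(x,y) := ⋃_{k∈ℕ} (I_k(x,a) ∩ Ĩ_k(y,a)) ∪ ([γ(x,a), γ̄] ∩ [γ̃(y,a), γ̄]). Then there exists a modulus of continuity ρ, depending only on γ̄, M and the moduli of uniform continuity of γ and of the p_k (in particular independent of γ̃ and the p̃_k), such that for all x, y ∈ ℝ^d and a ∈ A: |I^a(x,y)| / γ̄ ≥ 1 − ρ( |x − y| + ‖γ − γ̃‖_∞ + Σ_{k=0}^∞ 2^{−k}·‖p_k − p̃_k‖_∞ ), where ‖·‖_∞ denotes the supremum norm over ℝ^d × A and |·| the Lebesgue measure. -/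

import Mathlib

open scoped BigOperators

noncomputable section

/-- The branching interval
`I_k(g₁, q) = [ g₁·Σ_{l<k} q_l , g₁·Σ_{l<k+1} q_l )`. -/
def brInt (g₁ : ℝ) (q : ℕ → ℝ) (k : ℕ) : Set ℝ :=
  Set.Ico (g₁ * ∑ l ∈ Finset.range k, q l) (g₁ * ∑ l ∈ Finset.range (k + 1), q l)

/-- A modulus of continuity: nondecreasing, nonnegative, tending to `0` at `0⁺`. -/
def IsModulus (ρ : ℝ → ℝ) : Prop :=
  (∀ s, 0 ≤ ρ s) ∧ Monotone ρ ∧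
    Filter.Tendsto ρ (nhdsWithin 0 (Set.Ioi 0)) (nhds 0)

private lemma ofReal_sum_le' {ι : Type*} (s : Finset ι) (f : ι → ℝ) :
    ENNReal.ofReal (∑ i ∈ s, f i) ≤ ∑ i ∈ s, ENNReal.ofReal (f i) := by
  classical
  induction s using Finset.induction_on with
  | empty => simp
  | @insert a s ha ih =>
      rw [Finset.sum_insert ha, Finset.sum_insert ha]
      exact ENNReal.ofReal_add_le.trans (add_le_add_right ih _)

open Filter MeasureTheory Set in
set_option maxHeartbeats 3200000 in
/-- **Lemma 3.2 of the paper.** Uniform modulus estimate for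
perturbed branching data: there is a modulus of continuity `ρ`, independent of
the perturbed data `(γ̃, p̃)`, such that
`|I^a(x,y)|/γ̄ ≥ 1 − ρ(|x−y| + ‖γ−γ̃‖_∞ + Σ_k 2^{−k} ‖p_k−p̃_k‖_∞)`. -/
theorem perturbed_branching_intervals_modulus_estimate
    (d : ℕ) (hd : 0 < d) (A : Type) [Nonempty A]
    (γbar M : ℝ) (hγbar : 0 < γbar) (hM : 0 < M)
    (γ : (Fin d → ℝ) → A → ℝ)
    (p : ℕ → (Fin d → ℝ) → A → ℝ)
    (hγ : ∀ x a, γ x a ∈ Set.Icc (0 : ℝ) γbar)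
    (hp01 : ∀ k x a, p k x a ∈ Set.Icc (0 : ℝ) 1)
    (hpsum : ∀ x a, HasSum (fun k => p k x a) 1)
    (hpmean : ∀ x a, ∃ S, S ≤ M ∧ HasSum (fun k : ℕ => (k : ℝ) * p k x a) S)
    (hγUC : ∃ ρ, IsModulus ρ ∧ ∀ x y a, |γ x a - γ y a| ≤ ρ ‖x - y‖)
    (hpUC : ∀ k, ∃ ρ, IsModulus ρ ∧ ∀ x y a, |p k x a - p k y a| ≤ ρ ‖x - y‖) :
    ∃ ρ : ℝ → ℝ, IsModulus ρ ∧
      ∀ (γt : (Fin d → ℝ) → A → ℝ) (pt : ℕ → (Fin d → ℝ) → A → ℝ),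
        (∀ y a, γt y a ∈ Set.Icc (0 : ℝ) γbar) →
        (∀ k y a, pt k y a ∈ Set.Icc (0 : ℝ) 1) →
        (∀ y a, HasSum (fun k => pt k y a) 1) →
        ∀ (x y : Fin d → ℝ) (a : A),
          1 - ρ (‖x - y‖
                + (⨆ z : (Fin d → ℝ) × A, |γ z.1 z.2 - γt z.1 z.2|)
                + ∑' k : ℕ, (1 / 2 : ℝ) ^ k
                    * ⨆ z : (Fin d → ℝ) × A, |p k z.1 z.2 - pt k z.1 z.2|)
            ≤ (MeasureTheory.volume
                ((⋃ k : ℕ,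
                    (brInt (γ x a) (fun l => p l x a) k
                      ∩ brInt (γt y a) (fun l => pt l y a) k)) ∪
                  (Set.Icc (γ x a) γbar ∩ Set.Icc (γt y a) γbar))).toReal
              / γbar := by
  classical
  obtain ⟨ργ, hργmod, hργest⟩ := hγUC
  choose ρp hρpmod hρpest using hpUC
  have hγne : γbar ≠ 0 := ne_of_gt hγbar
  set D : ℕ → ℝ → ℝ := fun k t =>
    ργ t + max t 0 + γbar * ∑ l ∈ Finset.range k, (ρp l t + 2 ^ l * max t 0) with hDdef
  set E : ℕ → ℝ → ℝ := fun N t =>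
    M / ((N : ℝ) + 1) + γbar⁻¹ * ((ργ t + max t 0) + 2 * ((N : ℝ) + 1) * D (N + 1) t)
    with hEdef
  have hsumnn : ∀ k t, 0 ≤ ∑ l ∈ Finset.range k, (ρp l t + 2 ^ l * max t 0) := by
    intro k t
    exact Finset.sum_nonneg fun l _ => add_nonneg ((hρpmod l).1 t)
      (mul_nonneg (by positivity) (le_max_right _ _))
  have hDnn : ∀ k t, 0 ≤ D k t := by
    intro k t
    have h1 := hργmod.1 t
    have h2 : (0:ℝ) ≤ max t 0 := le_max_right _ _
    have h3 := hsumnn k t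
    simp only [hDdef]
    have := mul_nonneg hγbar.le h3
    linarith
  have hEnn : ∀ N t, 0 ≤ E N t := by
    intro N t
    have h1 := hργmod.1 t
    have h2 : (0:ℝ) ≤ max t 0 := le_max_right _ _
    have h3 := hDnn (N+1) t
    have h4 : (0:ℝ) ≤ M / ((N:ℝ)+1) := by positivity
    have h5 : (0:ℝ) ≤ γbar⁻¹ := by positivity
    have h6 : (0:ℝ) ≤ 2 * ((N:ℝ)+1) * D (N+1) t := mul_nonneg (by positivity) h3
    simp only [hEdef]
    have := mul_nonneg h5 (add_nonneg (add_nonneg h1 h2) h6)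
    linarith
  have hDmono : ∀ k, Monotone fun t => D k t := by
    intro k a b hab
    have hmax : max a 0 ≤ max b 0 := max_le_max hab le_rfl
    simp only [hDdef]
    exact add_le_add (add_le_add (hργmod.2.1 hab) hmax)
      (mul_le_mul_of_nonneg_left
        (Finset.sum_le_sum fun l _ => add_le_add ((hρpmod l).2.1 hab)
          (mul_le_mul_of_nonneg_left hmax (by positivity))) hγbar.le)
  have hEmono : ∀ N, Monotone fun t => E N t := by
    intro N a b hab
    have hmax : max a 0 ≤ max b 0 := max_le_max hab le_rfl
    simp only [hEdef]
    exact add_le_add le_rfl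
      (mul_le_mul_of_nonneg_left
        (add_le_add (add_le_add (hργmod.2.1 hab) hmax)
          (mul_le_mul_of_nonneg_left (hDmono (N+1) hab) (by positivity)))
        (by positivity))
  have hmaxtend : Tendsto (fun t : ℝ => max t 0) (nhdsWithin 0 (Set.Ioi 0)) (nhds 0) := by
    have h : Tendsto (fun t : ℝ => max t 0) (nhds 0) (nhds (max 0 0)) :=
      (continuous_id.max continuous_const).tendsto 0
    simpa using h.mono_left nhdsWithin_le_nhds
  have hDtend : ∀ k, Tendsto (fun t => D k t) (nhdsWithin 0 (Set.Ioi 0)) (nhds 0) := by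
    intro k
    have hsum : Tendsto (fun t => ∑ l ∈ Finset.range k, (ρp l t + 2 ^ l * max t 0))
        (nhdsWithin 0 (Set.Ioi 0)) (nhds 0) := by
      have h := tendsto_finset_sum (Finset.range k)
        (fun l _ => ((hρpmod l).2.2.add (hmaxtend.const_mul ((2:ℝ) ^ l))))
      simpa using h
    have h := (hργmod.2.2.add hmaxtend).add (hsum.const_mul γbar)
    simp only [hDdef]
    simpa using h
  have hEtend : ∀ N, Tendsto (fun t => E N t) (nhdsWithin 0 (Set.Ioi 0))
      (nhds (M / ((N:ℝ)+1))) := by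
    intro N
    have h1 : Tendsto (fun t => (ργ t + max t 0) + 2 * ((N:ℝ)+1) * D (N+1) t)
        (nhdsWithin 0 (Set.Ioi 0)) (nhds 0) := by
      have h := (hργmod.2.2.add hmaxtend).add ((hDtend (N+1)).const_mul (2 * ((N:ℝ)+1)))
      simpa using h
    have h := (tendsto_const_nhds (x := M / ((N:ℝ)+1))).add (h1.const_mul γbar⁻¹)
    simp only [hEdef]
    simpa using h
  have hbddB : ∀ t, BddBelow (Set.range fun N => E N t) := by
    intro t
    exact ⟨0, by rintro _ ⟨N, rfl⟩; exact hEnn N t⟩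
  refine ⟨fun t => ⨅ N, E N t, ⟨fun t => le_ciInf fun N => hEnn N t, ?_, ?_⟩, ?_⟩
  · -- monotone
    intro a b hab
    exact le_ciInf fun N => (ciInf_le (hbddB a) N).trans (hEmono N hab)
  · -- tendsto 0
    rw [tendsto_order]
    constructor
    · intro c hc
      filter_upwards with t
      exact lt_of_lt_of_le hc (le_ciInf fun N => hEnn N t)
    · intro ε hε
      obtain ⟨N, hN⟩ := exists_nat_gt (2 * M / ε)
      have h2 : 2 * M < (N:ℝ) * ε := by rwa [div_lt_iff₀ hε] at hN
      have hNε : M / ((N:ℝ)+1) < ε := by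
        rw [div_lt_iff₀ (by positivity)]
        nlinarith
      filter_upwards [(hEtend N).eventually_lt_const hNε] with t ht
      exact lt_of_le_of_lt (ciInf_le (hbddB t) N) ht
  -- main estimate
  intro γt pt hγt' hpt' hptsum x y a
  dsimp only
  haveI : Nonempty ((Fin d → ℝ) × A) := ⟨(fun _ => 0, Classical.arbitrary A)⟩
  set Sγ := ⨆ z : (Fin d → ℝ) × A, |γ z.1 z.2 - γt z.1 z.2| with hSγdef
  set Sp := ∑' k : ℕ, (1 / 2 : ℝ) ^ k
      * ⨆ z : (Fin d → ℝ) × A, |p k z.1 z.2 - pt k z.1 z.2| with hSpdef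
  set s := ‖x - y‖ + Sγ + Sp with hsdef
  set q : ℕ → ℝ := fun k => ⨆ z : (Fin d → ℝ) × A, |p k z.1 z.2 - pt k z.1 z.2| with hqdef
  -- basic facts about the sups
  have hqabs : ∀ k (z : (Fin d → ℝ) × A), |p k z.1 z.2 - pt k z.1 z.2| ≤ 1 := by
    intro k z
    have h1 := hp01 k z.1 z.2
    have h2 := hpt' k z.1 z.2
    rw [abs_le]
    exact ⟨by linarith [h1.1, h2.2], by linarith [h1.2, h2.1]⟩
  have hqbdd : ∀ k, BddAbove (Set.range fun z : (Fin d → ℝ) × A =>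
      |p k z.1 z.2 - pt k z.1 z.2|) := by
    intro k
    exact ⟨1, by rintro _ ⟨z, rfl⟩; exact hqabs k z⟩
  have hqnn : ∀ k, 0 ≤ q k := fun k => Real.iSup_nonneg fun z => abs_nonneg _
  have hq1 : ∀ k, q k ≤ 1 := fun k => ciSup_le fun z => hqabs k z
  have hSpsummable : Summable fun k : ℕ => (1 / 2 : ℝ) ^ k * q k := by
    refine Summable.of_nonneg_of_le (fun k => mul_nonneg (by positivity) (hqnn k))
      (fun k => ?_) (summable_geometric_of_lt_one (by norm_num) (by norm_num : (1/2:ℝ) < 1))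
    calc (1 / 2 : ℝ) ^ k * q k ≤ (1 / 2 : ℝ) ^ k * 1 :=
          mul_le_mul_of_nonneg_left (hq1 k) (by positivity)
      _ = (1 / 2 : ℝ) ^ k := by ring
  have hSp_nn : 0 ≤ Sp := tsum_nonneg fun k => mul_nonneg (by positivity) (hqnn k)
  have hSγbdd : BddAbove (Set.range fun z : (Fin d → ℝ) × A => |γ z.1 z.2 - γt z.1 z.2|) := by
    refine ⟨γbar, ?_⟩
    rintro _ ⟨z, rfl⟩
    have h1 := hγ z.1 z.2
    have h2 := hγt' z.1 z.2
    rw [abs_le]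
    exact ⟨by linarith [h1.1, h2.2], by linarith [h1.2, h2.1]⟩
  have hSγ_nn : 0 ≤ Sγ := Real.iSup_nonneg fun z => abs_nonneg _
  have hs_nn : 0 ≤ s := by
    rw [hsdef]; exact add_nonneg (add_nonneg (norm_nonneg _) hSγ_nn) hSp_nn
  have hxy_le : ‖x - y‖ ≤ s := by rw [hsdef]; linarith
  have hSγ_le : Sγ ≤ s := by rw [hsdef]; linarith [norm_nonneg (x - y)]
  have hSp_le : Sp ≤ s := by rw [hsdef]; linarith [norm_nonneg (x - y)]
  have hmaxs : max s 0 = s := max_eq_left hs_nn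
  have hDs : ∀ k, D k s = ργ s + s + γbar * ∑ l ∈ Finset.range k, (ρp l s + 2 ^ l * s) := by
    intro k
    simp only [hDdef]
    rw [max_eq_left hs_nn]
  have hSpq : Sp = ∑' k : ℕ, (1 / 2 : ℝ) ^ k * q k := by rw [hSpdef, hqdef]
  -- pointwise bounds
  have hγd : |γ x a - γt y a| ≤ ργ s + s := by
    calc |γ x a - γt y a| ≤ |γ x a - γ y a| + |γ y a - γt y a| := abs_sub_le _ _ _
      _ ≤ ργ ‖x - y‖ + Sγ := by
          refine add_le_add (hργest x y a) ?_
          rw [hSγdef]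
          exact le_ciSup hSγbdd (y, a)
      _ ≤ ργ s + s := add_le_add (hργmod.2.1 hxy_le) hSγ_le
  have hq_le : ∀ k, q k ≤ 2 ^ k * s := by
    intro k
    have h1 : (1 / 2 : ℝ) ^ k * q k ≤ Sp := by
      rw [hSpq]
      exact Summable.le_tsum hSpsummable k fun j _ => mul_nonneg (by positivity) (hqnn j)
    have h2 : (2 : ℝ) ^ k * (1 / 2 : ℝ) ^ k = 1 := by
      rw [← mul_pow]; norm_num
    calc q k = (2 : ℝ) ^ k * ((1 / 2 : ℝ) ^ k * q k) := by
          rw [← mul_assoc, h2, one_mul]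
      _ ≤ (2 : ℝ) ^ k * Sp := mul_le_mul_of_nonneg_left h1 (by positivity)
      _ ≤ 2 ^ k * s := mul_le_mul_of_nonneg_left hSp_le (by positivity)
  have hpd : ∀ k, |p k x a - pt k y a| ≤ ρp k s + 2 ^ k * s := by
    intro k
    calc |p k x a - pt k y a| ≤ |p k x a - p k y a| + |p k y a - pt k y a| := abs_sub_le _ _ _
      _ ≤ ρp k ‖x - y‖ + q k := by
          refine add_le_add (hρpest k x y a) ?_
          rw [hqdef]
          exact le_ciSup (hqbdd k) (y, a)
      _ ≤ ρp k s + 2 ^ k * s := add_le_add ((hρpmod k).2.1 hxy_le) (hq_le k)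
  -- partial sums and endpoints
  set L : ℕ → ℝ := fun k => γ x a * ∑ l ∈ Finset.range k, p l x a with hLdef
  set Lt : ℕ → ℝ := fun k => γt y a * ∑ l ∈ Finset.range k, pt l y a with hLtdef
  have hg := hγ x a
  have hgt := hγt' y a
  have hPnn : ∀ k, 0 ≤ p k x a := fun k => (hp01 k x a).1
  have hPtnn : ∀ k, 0 ≤ pt k y a := fun k => (hpt' k y a).1
  have hPsum_le : ∀ n, ∑ k ∈ Finset.range n, p k x a ≤ 1 :=
    fun n => sum_le_hasSum _ (fun k _ => hPnn k) (hpsum x a)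
  have hPtsum_le : ∀ n, ∑ k ∈ Finset.range n, pt k y a ≤ 1 :=
    fun n => sum_le_hasSum _ (fun k _ => hPtnn k) (hptsum y a)
  have hPsum_nn : ∀ n, (0:ℝ) ≤ ∑ k ∈ Finset.range n, p k x a :=
    fun n => Finset.sum_nonneg fun k _ => hPnn k
  have hLmono : Monotone L := by
    intro i j hij
    simp only [hLdef]
    exact mul_le_mul_of_nonneg_left
      (Finset.sum_le_sum_of_subset_of_nonneg (Finset.range_subset_range.2 hij)
        (fun k _ _ => hPnn k)) hg.1
  have hLnn : ∀ k, 0 ≤ L k := by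
    intro k; simp only [hLdef]; exact mul_nonneg hg.1 (hPsum_nn k)
  have hLle : ∀ k, L k ≤ γ x a := by
    intro k; simp only [hLdef]; exact mul_le_of_le_one_right hg.1 (hPsum_le k)
  have hLtle : ∀ k, Lt k ≤ γt y a := by
    intro k; simp only [hLtdef]; exact mul_le_of_le_one_right hgt.1 (hPtsum_le k)
  -- endpoint deviation bound
  have hDk : ∀ k, |L k - Lt k| ≤ D k s := by
    intro k
    have hA : |∑ l ∈ Finset.range k, p l x a - ∑ l ∈ Finset.range k, pt l y a|
        ≤ ∑ l ∈ Finset.range k, (ρp l s + 2 ^ l * s) := by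
      rw [← Finset.sum_sub_distrib]
      exact (Finset.abs_sum_le_sum_abs _ _).trans (Finset.sum_le_sum fun l _ => hpd l)
    have hsplit : L k - Lt k = (γ x a - γt y a) * (∑ l ∈ Finset.range k, p l x a)
        + γt y a * (∑ l ∈ Finset.range k, p l x a - ∑ l ∈ Finset.range k, pt l y a) := by
      simp only [hLdef, hLtdef]; ring
    have hργs : 0 ≤ ργ s + s := add_nonneg (hργmod.1 s) hs_nn
    calc |L k - Lt k|
        ≤ |γ x a - γt y a| * |∑ l ∈ Finset.range k, p l x a|
          + |γt y a| * |∑ l ∈ Finset.range k, p l x a - ∑ l ∈ Finset.range k, pt l y a| := by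
          rw [hsplit]
          exact (abs_add_le _ _).trans (by rw [abs_mul, abs_mul])
      _ ≤ (ργ s + s) * 1 + γbar * ∑ l ∈ Finset.range k, (ρp l s + 2 ^ l * s) := by
          refine add_le_add (mul_le_mul hγd ?_ (abs_nonneg _) hργs)
            (mul_le_mul ?_ hA (abs_nonneg _) hγbar.le)
          · rw [abs_of_nonneg (hPsum_nn k)]; exact hPsum_le k
          · rw [abs_of_nonneg hgt.1]; exact hgt.2
      _ = D k s := by rw [hDs k]; ring
  have hDmonok : ∀ {i j : ℕ}, i ≤ j → D i s ≤ D j s := by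
    intro i j hij
    rw [hDs i, hDs j]
    have h := Finset.sum_le_sum_of_subset_of_nonneg (f := fun l => ρp l s + 2 ^ l * s)
      (Finset.range_subset_range.2 hij)
      (fun l _ _ => add_nonneg ((hρpmod l).1 s)
        (mul_nonneg (by positivity : (0:ℝ) ≤ 2 ^ l) hs_nn))
    nlinarith [mul_le_mul_of_nonneg_left h hγbar.le]
  -- set U
  set U := ((⋃ k : ℕ,
      (brInt (γ x a) (fun l => p l x a) k ∩ brInt (γt y a) (fun l => pt l y a) k)) ∪
      (Set.Icc (γ x a) γbar ∩ Set.Icc (γt y a) γbar)) with hUdef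
  clear_value U L Lt q s Sp Sγ E D
  have hUeq : U = (⋃ k : ℕ, Set.Ico (L k ⊔ Lt k) (L (k+1) ⊓ Lt (k+1)))
      ∪ Set.Icc (γ x a ⊔ γt y a) γbar := by
    rw [hUdef, hLdef, hLtdef]
    simp only [brInt, Set.Ico_inter_Ico, Set.Icc_inter_Icc, min_self]
  have hUne : MeasureTheory.volume U ≠ ⊤ := by
    have hsub : U ⊆ Set.Icc 0 γbar := by
      rw [hUeq]
      rintro t (ht | ht)
      · obtain ⟨k, hk⟩ := Set.mem_iUnion.1 ht
        rw [Set.mem_Ico] at hk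
        constructor
        · exact le_trans (le_trans (hLnn k) (le_max_left _ _)) hk.1
        · have h1 : t < L (k+1) := lt_of_lt_of_le hk.2 (min_le_left _ _)
          exact le_of_lt (lt_of_lt_of_le h1 (le_trans (hLle (k+1)) hg.2))
      · rw [Set.mem_Icc] at ht
        exact ⟨le_trans hg.1 (le_trans (le_max_left _ _) ht.1), ht.2⟩
    have h : MeasureTheory.volume U ≤ MeasureTheory.volume (Set.Icc (0:ℝ) γbar) :=
      MeasureTheory.measure_mono hsub
    rw [Real.volume_Icc] at h
    exact ne_top_of_le_ne_top ENNReal.ofReal_ne_top h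
  -- key per-N estimate
  have key : ∀ N : ℕ, (1 - E N s) * γbar ≤ (MeasureTheory.volume U).toReal := by
    intro N
    -- Markov bound on the tail of p
    obtain ⟨Sm, hSmM, hSm⟩ := hpmean x a
    have hsumP : Summable fun k => p k x a := (hpsum x a).summable
    have hsumkP : Summable fun k : ℕ => (k : ℝ) * p k x a := hSm.summable
    have h1 : ∑ k ∈ Finset.range (N+1), p k x a + ∑' i : ℕ, p (i + (N+1)) x a = 1 := by
      rw [Summable.sum_add_tsum_nat_add (N+1) hsumP, (hpsum x a).tsum_eq]
    have htail_summ : Summable fun i : ℕ => p (i + (N+1)) x a :=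
      (summable_nat_add_iff (N+1)).2 hsumP
    have htail2_summ : Summable fun i : ℕ => ((i + (N+1) : ℕ) : ℝ) * p (i + (N+1)) x a :=
      (summable_nat_add_iff (f := fun k : ℕ => (k : ℝ) * p k x a) (N+1)).2 hsumkP
    have h2 : ∑' i : ℕ, ((i + (N+1) : ℕ) : ℝ) * p (i + (N+1)) x a ≤ M := by
      have hps := Summable.sum_add_tsum_nat_add (f := fun k : ℕ => (k : ℝ) * p k x a) (N+1) hsumkP
      rw [hSm.tsum_eq] at hps
      have hpartial : (0:ℝ) ≤ ∑ k ∈ Finset.range (N+1), (k : ℝ) * p k x a :=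
        Finset.sum_nonneg fun k _ => mul_nonneg (Nat.cast_nonneg k) (hPnn k)
      linarith
    have h3 : ∑' i : ℕ, p (i + (N+1)) x a ≤ M / ((N:ℝ)+1) := by
      have hstep : ∀ i : ℕ, p (i + (N+1)) x a
          ≤ (1/((N:ℝ)+1)) * (((i + (N+1) : ℕ) : ℝ) * p (i + (N+1)) x a) := by
        intro i
        have hc : ((N:ℝ)+1) ≤ ((i + (N+1) : ℕ) : ℝ) := by
          push_cast
          linarith [Nat.cast_nonneg (α := ℝ) i]
        have h' : ((N:ℝ)+1) * p (i + (N+1)) x a ≤ ((i + (N+1) : ℕ) : ℝ) * p (i + (N+1)) x a :=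
          mul_le_mul_of_nonneg_right hc (hPnn _)
        have hNpos : (0:ℝ) < (N:ℝ)+1 := by positivity
        calc p (i + (N+1)) x a
            = (1/((N:ℝ)+1)) * (((N:ℝ)+1) * p (i + (N+1)) x a) := by field_simp
          _ ≤ _ := mul_le_mul_of_nonneg_left h' (by positivity)
      calc ∑' i : ℕ, p (i + (N+1)) x a
          ≤ ∑' i : ℕ, (1/((N:ℝ)+1)) * (((i + (N+1) : ℕ) : ℝ) * p (i + (N+1)) x a) :=
            Summable.tsum_le_tsum hstep htail_summ (htail2_summ.mul_left _)
        _ = (1/((N:ℝ)+1)) * ∑' i : ℕ, ((i + (N+1) : ℕ) : ℝ) * p (i + (N+1)) x a :=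
            tsum_mul_left
        _ ≤ (1/((N:ℝ)+1)) * M := mul_le_mul_of_nonneg_left h2 (by positivity)
        _ = M / ((N:ℝ)+1) := by ring
    have hMarkov : 1 - M/((N:ℝ)+1) ≤ ∑ k ∈ Finset.range (N+1), p k x a := by linarith
    -- per-k interval length lower bound
    have hm_lb : ∀ k, k ≤ N → γ x a * p k x a - 2 * D (N+1) s
        ≤ (L (k+1) ⊓ Lt (k+1)) - (L k ⊔ Lt k) := by
      intro k hk
      have hDk1 := hDk (k+1)
      have hDk0 := hDk k
      have h1 : L (k+1) - D (k+1) s ≤ L (k+1) ⊓ Lt (k+1) := by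
        refine le_min (by linarith [hDnn (k+1) s]) ?_
        linarith [le_abs_self (L (k+1) - Lt (k+1))]
      have h2 : (L k ⊔ Lt k) ≤ L k + D k s := by
        refine max_le (by linarith [hDnn k s]) ?_
        linarith [neg_abs_le (L k - Lt k)]
      have h3 : L (k+1) - L k = γ x a * p k x a := by
        simp only [hLdef]
        rw [Finset.sum_range_succ]
        ring
      have h4 : D k s ≤ D (N+1) s := hDmonok (by omega)
      have h5 : D (k+1) s ≤ D (N+1) s := hDmonok (by omega)
      linarith
    have hsum_lb : γ x a * (∑ k ∈ Finset.range (N+1), p k x a) - ((N:ℝ)+1) * (2 * D (N+1) s)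
        ≤ ∑ k ∈ Finset.range (N+1), ((L (k+1) ⊓ Lt (k+1)) - (L k ⊔ Lt k)) := by
      have h := Finset.sum_le_sum (f := fun k => γ x a * p k x a - 2 * D (N+1) s)
        (fun k hk => hm_lb k (Nat.lt_succ_iff.1 (Finset.mem_range.1 hk)))
      calc γ x a * (∑ k ∈ Finset.range (N+1), p k x a) - ((N:ℝ)+1) * (2 * D (N+1) s)
          = ∑ k ∈ Finset.range (N+1), (γ x a * p k x a - 2 * D (N+1) s) := by
            rw [Finset.sum_sub_distrib, ← Finset.mul_sum, Finset.sum_const, Finset.card_range]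
            push_cast
            ring
        _ ≤ _ := h
    -- tail piece
    have ht0 : γbar - γ x a - (ργ s + s) ≤ γbar - (γ x a ⊔ γt y a) := by
      have h : (γ x a ⊔ γt y a) ≤ γ x a + (ργ s + s) := by
        refine max_le (by linarith [hργmod.1 s, hs_nn]) ?_
        linarith [neg_abs_le (γ x a - γt y a)]
      linarith
    -- core real inequality
    have hEs : E N s = M / ((N:ℝ)+1)
        + γbar⁻¹ * ((ργ s + s) + 2 * ((N:ℝ)+1) * D (N+1) s) := by
      simp only [hEdef]
      rw [hmaxs]
    have hcore : (1 - E N s) * γbar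
        ≤ (∑ k ∈ Finset.range (N+1), ((L (k+1) ⊓ Lt (k+1)) - (L k ⊔ Lt k)))
          + (γbar - (γ x a ⊔ γt y a)) := by
      have e1 : (1 - E N s) * γbar = γbar - γbar * (M/((N:ℝ)+1))
          - ((ργ s + s) + 2 * ((N:ℝ)+1) * D (N+1) s) := by
        rw [hEs]
        field_simp
        ring
      have e2 : γ x a - γ x a * (M/((N:ℝ)+1)) ≤ γ x a * ∑ k ∈ Finset.range (N+1), p k x a := by
        have := mul_le_mul_of_nonneg_left hMarkov hg.1
        nlinarith
      have e3 : γ x a * (M/((N:ℝ)+1)) ≤ γbar * (M/((N:ℝ)+1)) :=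
        mul_le_mul_of_nonneg_right hg.2 (by positivity)
      nlinarith [hsum_lb, ht0, e1, e2, e3]
    -- disjointness
    have hdisjS : ∀ i j : ℕ, i < j →
        Disjoint (Set.Ico (L i ⊔ Lt i) (L (i+1) ⊓ Lt (i+1)))
          (Set.Ico (L j ⊔ Lt j) (L (j+1) ⊓ Lt (j+1))) := by
      intro i j hij
      rw [Set.disjoint_left]
      intro t ht1 ht2
      rw [Set.mem_Ico] at ht1 ht2
      have h1 : t < L (i+1) := lt_of_lt_of_le ht1.2 (min_le_left _ _)
      have h2 : L (i+1) ≤ L j := hLmono (by omega)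
      have h3 : L j ≤ t := le_trans (le_max_left _ _) ht2.1
      linarith
    have hPD : Set.PairwiseDisjoint (↑(Finset.range (N+1)))
        (fun k => Set.Ico (L k ⊔ Lt k) (L (k+1) ⊓ Lt (k+1))) := by
      intro i _ j _ hij
      rcases lt_or_gt_of_ne hij with h | h
      · exact hdisjS i j h
      · exact (hdisjS j i h).symm
    have hdisjT : Disjoint (⋃ k ∈ Finset.range (N+1), Set.Ico (L k ⊔ Lt k) (L (k+1) ⊓ Lt (k+1)))
        (Set.Icc (γ x a ⊔ γt y a) γbar) := by
      rw [Set.disjoint_left]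
      intro t ht htT
      simp only [Set.mem_iUnion, Set.mem_Ico] at ht
      obtain ⟨k, _, _, hku⟩ := ht
      rw [Set.mem_Icc] at htT
      have h1 : t < Lt (k+1) := lt_of_lt_of_le hku (min_le_right _ _)
      have h2 : Lt (k+1) ≤ γt y a := hLtle _
      have h3 : γt y a ≤ t := le_trans (le_max_right _ _) htT.1
      linarith
    -- chain in ENNReal
    rw [← ENNReal.ofReal_le_iff_le_toReal hUne]
    calc ENNReal.ofReal ((1 - E N s) * γbar)
        ≤ ENNReal.ofReal ((∑ k ∈ Finset.range (N+1), ((L (k+1) ⊓ Lt (k+1)) - (L k ⊔ Lt k)))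
            + (γbar - (γ x a ⊔ γt y a))) := ENNReal.ofReal_le_ofReal hcore
      _ ≤ (∑ k ∈ Finset.range (N+1),
            ENNReal.ofReal ((L (k+1) ⊓ Lt (k+1)) - (L k ⊔ Lt k)))
            + ENNReal.ofReal (γbar - (γ x a ⊔ γt y a)) :=
          ENNReal.ofReal_add_le.trans (add_le_add_left (ofReal_sum_le' _ _) _)
      _ = (∑ k ∈ Finset.range (N+1),
            MeasureTheory.volume (Set.Ico (L k ⊔ Lt k) (L (k+1) ⊓ Lt (k+1))))
            + MeasureTheory.volume (Set.Icc (γ x a ⊔ γt y a) γbar) := by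
          rw [Real.volume_Icc]
          congr 1
          exact Finset.sum_congr rfl fun k _ => (Real.volume_Ico).symm
      _ = MeasureTheory.volume
            ((⋃ k ∈ Finset.range (N+1), Set.Ico (L k ⊔ Lt k) (L (k+1) ⊓ Lt (k+1)))
              ∪ Set.Icc (γ x a ⊔ γt y a) γbar) := by
          rw [MeasureTheory.measure_union hdisjT measurableSet_Icc,
            MeasureTheory.measure_biUnion_finset hPD fun k _ => measurableSet_Ico]
      _ ≤ MeasureTheory.volume U := by
          refine MeasureTheory.measure_mono ?_
          rw [hUeq]
          exact Set.union_subset_union_left _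
            (Set.iUnion₂_subset fun k _ => Set.subset_iUnion
              (fun k => Set.Ico (L k ⊔ Lt k) (L (k+1) ⊓ Lt (k+1))) k)
  -- conclude
  rw [sub_le_comm]
  refine le_ciInf fun N => ?_
  have h2 : 1 - E N s ≤ (MeasureTheory.volume U).toReal / γbar :=
    (le_div_iff₀ hγbar).2 (key N)
  linarith


end
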